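/- Let (A, A*) be a tridiagonal pair on V with eigenspace orderings V_0, ..., V_d of A and V*_0, ..., V*_d of A*, with d ≥ 1, and let (A', A*') be a second tridiagonal pair on V with eigenspace orderings V'_0, ..., V'_d and V*'_0, ..., V*'_d. Assume V_i = V'_i and V*_i = V*'_i for 0 ≤ i ≤ d. Then there exist scalars r, s ∈ K with r ≠ 0 such that A' = rA + sI, and there exist scalars r*, s* ∈ K with r* ≠ 0 such that A*' = r*A* + s*I. -/
import Mathlib


open Polynomial

/-- A tridiagonal pair on `V`, with eigenspace orderings `Ev 0, ..., Ev d` of `A`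
(with eigenvalues `θ 0, ..., θ d`) and `Ew 0, ..., Ew d` of `B = A*`
(with eigenvalues `θ' 0, ..., θ' d`).  For indices `i > d` we set `Ev i = ⊥`,
`Ew i = ⊥`, encoding the conventions `V_{-1} = 0`, `V_{d+1} = 0`
(note `Ev (0 - 1) = Ev 0` by truncated subtraction, which is harmless in the
tridiagonal conditions below since `Ev i` appears in the sum anyway). -/
structure TridiagonalPair (K V : Type*) [Field K] [AddCommGroup V] [Module K V]
    [FiniteDimensional K V] where
  A : Module.End K V
  B : Module.End K V
  d : ℕ
  Ev : ℕ → Submodule K V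
  Ew : ℕ → Submodule K V
  θ : ℕ → K
  θ' : ℕ → K
  hEv_eig : ∀ i ≤ d, Ev i = Module.End.eigenspace A (θ i)
  hEv_ne : ∀ i ≤ d, Ev i ≠ ⊥
  hEv_all : ∀ μ : K, Module.End.eigenspace A μ ≠ ⊥ → ∃ i ≤ d, θ i = μ
  hθ_inj : ∀ i ≤ d, ∀ j ≤ d, θ i = θ j → i = j
  hEv_top : (⨆ i ∈ Finset.range (d + 1), Ev i) = ⊤
  hEv_bot : ∀ i, d < i → Ev i = ⊥
  hEw_eig : ∀ i ≤ d, Ew i = Module.End.eigenspace B (θ' i)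
  hEw_ne : ∀ i ≤ d, Ew i ≠ ⊥
  hEw_all : ∀ μ : K, Module.End.eigenspace B μ ≠ ⊥ → ∃ i ≤ d, θ' i = μ
  hθ'_inj : ∀ i ≤ d, ∀ j ≤ d, θ' i = θ' j → i = j
  hEw_top : (⨆ i ∈ Finset.range (d + 1), Ew i) = ⊤
  hEw_bot : ∀ i, d < i → Ew i = ⊥
  hTriB : ∀ i ≤ d, ∀ v ∈ Ev i, B v ∈ Ev (i - 1) ⊔ Ev i ⊔ Ev (i + 1)
  hTriA : ∀ i ≤ d, ∀ v ∈ Ew i, A v ∈ Ew (i - 1) ⊔ Ew i ⊔ Ew (i + 1)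
  hIrr : ∀ W : Submodule K V, (∀ v ∈ W, A v ∈ W) → (∀ v ∈ W, B v ∈ W) →
    W = ⊥ ∨ W = ⊤

/-- The polynomial `τ_i = (λ - θ_0)(λ - θ_1) ⋯ (λ - θ_{i-1})`. -/
noncomputable def tau {K : Type*} [Field K] (θ : ℕ → K) (i : ℕ) : Polynomial K :=
  ∏ k ∈ Finset.range i, (X - C (θ k))

section Helpers
variable {K V : Type*} [Field K] [AddCommGroup V] [Module K V] [FiniteDimensional K V]

omit [FiniteDimensional K V] in
lemma mem_biSup_finset {M : ℕ → Submodule K V} {s : Finset ℕ} {v : V}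
    (hv : v ∈ ⨆ h ∈ s, M h) :
    ∃ c : ℕ → V, (∀ h ∈ s, c h ∈ M h) ∧ v = ∑ h ∈ s, c h := by
  classical
  induction s using Finset.induction_on generalizing v with
  | empty => simp only [Finset.notMem_empty, iSup_false, iSup_bot, Submodule.mem_bot] at hv
             exact ⟨0, by simp, by simp [hv]⟩
  | @insert a s ha ih =>
      rw [Finset.iSup_insert] at hv
      obtain ⟨y, hy, z, hz, rfl⟩ := Submodule.mem_sup.1 hv
      obtain ⟨c, hc, rfl⟩ := ih hz
      refine ⟨fun h => if h = a then y else c h, ?_, ?_⟩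
      · intro h hh
        rcases Finset.mem_insert.1 hh with rfl | hmem
        · simp [hy]
        · have hne : h ≠ a := by rintro rfl; exact ha hmem
          simp [hne, hc h hmem]
      · rw [Finset.sum_insert ha, if_pos rfl]
        congr 1
        exact (Finset.sum_congr rfl (fun h hh => by
          have hne : h ≠ a := by rintro rfl; exact ha hh
          simp [hne])).symm

omit [FiniteDimensional K V] in
lemma aeval_eig {f : Module.End K V} {c : K} {v : V} (hv : f v = c • v) (g : Polynomial K) :
    Polynomial.aeval f g v = g.eval c • v := by
  rcases eq_or_ne v 0 with rfl | hv0
  · simp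
  · exact Module.End.aeval_apply_of_hasEigenvector ⟨Module.End.mem_eigenspace_iff.2 hv, hv0⟩

lemma dimcount {X Y X' Y' : Submodule K V} (h1 : X ⊔ Y = ⊤) (h2 : X' ⊔ Y' = ⊤)
    (h3 : Module.finrank K X + Module.finrank K X' = Module.finrank K V)
    (h4 : Module.finrank K Y + Module.finrank K Y' = Module.finrank K V) :
    X ⊓ Y = ⊥ := by
  have e1 := Submodule.finrank_sup_add_finrank_inf_eq X Y
  have e2 := Submodule.finrank_sup_add_finrank_inf_eq X' Y'
  rw [h1, finrank_top] at e1
  rw [h2, finrank_top] at e2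
  have : Module.finrank K ↥(X ⊓ Y) = 0 := by omega
  exact Submodule.finrank_eq_zero.1 this

set_option linter.unusedSectionVars false in

/-- Abstract "split decomposition sum" lemma. -/
lemma step1 (A B : Module.End K V) (d : ℕ) (F G : ℕ → Submodule K V) (θ θ' : ℕ → K)
    (hF0 : F 0 ≠ ⊥)
    (hGtop : G 0 = ⊤)
    (hGbot : ∀ j, d < j → G j = ⊥)
    (hFmono : ∀ j, F j ≤ F (j + 1))
    (hGmono : ∀ j, G (j + 1) ≤ G j)
    (hAF : ∀ j, ∀ v ∈ F j, A v ∈ F (j + 1))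
    (hB0 : ∀ v ∈ F 0, B v = θ' 0 • v)
    (hBF : ∀ j, 1 ≤ j → j ≤ d → ∀ v ∈ F j, B v - θ' j • v ∈ F (j - 1))
    (hAG : ∀ j ≤ d, ∀ v ∈ G j, A v - θ j • v ∈ G (j + 1))
    (hBG : ∀ j, ∀ v ∈ G j, B v ∈ G (j - 1))
    (hIrr : ∀ W : Submodule K V, (∀ v ∈ W, A v ∈ W) → (∀ v ∈ W, B v ∈ W) →
      W = ⊥ ∨ W = ⊤) :
    ∀ k, F k ⊔ G (k + 1) = ⊤ := by
  classical
  set U : ℕ → Submodule K V := fun j => F j ⊓ G j with hU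
  have hFle : ∀ {j k}, j ≤ k → F j ≤ F k := by
    intro j k hjk
    induction k with
    | zero => simp_all
    | succ n ih => rcases Nat.lt_succ_iff_lt_or_eq.1 (Nat.lt_succ_of_le hjk) with h | rfl
                   · exact le_trans (ih (by omega)) (hFmono n)
                   · exact le_rfl
  have hGle : ∀ {j k}, j ≤ k → G k ≤ G j := by
    intro j k hjk
    induction k with
    | zero => simp_all
    | succ n ih => rcases Nat.lt_succ_iff_lt_or_eq.1 (Nat.lt_succ_of_le hjk) with h | rfl
                   · exact le_trans (hGmono n) (ih (by omega))
                   · exact le_rfl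
  set W : Submodule K V := ⨆ j ∈ Finset.range (d + 1), U j with hW
  have hUW : ∀ j ≤ d, U j ≤ W := fun j hj =>
    le_iSup₂_of_le j (Finset.mem_range.2 (Nat.lt_succ_of_le hj)) le_rfl
  have hUbot : ∀ j, d < j → U j = ⊥ := by
    intro j hj
    rw [hU]
    simp only [hGbot j hj, inf_bot_eq]
  -- A-invariance
  have hAU : ∀ j ≤ d, ∀ v ∈ U j, A v ∈ W := by
    intro j hj v hv
    obtain ⟨hvF, hvG⟩ := hv
    have h1 : A v = θ j • v + (A v - θ j • v) := by abel
    have h2 : θ j • v ∈ U j := Submodule.smul_mem _ _ ⟨hvF, hvG⟩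
    have h3 : A v - θ j • v ∈ U (j + 1) := by
      refine ⟨?_, hAG j hj v hvG⟩
      exact Submodule.sub_mem _ (hAF j v hvF) (Submodule.smul_mem _ _ (hFmono j hvF))
    rcases Nat.lt_or_ge d (j + 1) with h | h
    · rw [hUbot (j + 1) h, Submodule.mem_bot] at h3
      rw [h1, h3, add_zero]
      exact hUW j hj h2
    · rw [h1]
      exact Submodule.add_mem _ (hUW j hj h2) (hUW (j + 1) h h3)
  have hBU : ∀ j ≤ d, ∀ v ∈ U j, B v ∈ W := by
    intro j hj v hv
    obtain ⟨hvF, hvG⟩ := hv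
    rcases Nat.eq_zero_or_pos j with rfl | hjpos
    · rw [hB0 v hvF]
      exact hUW 0 hj (Submodule.smul_mem _ _ ⟨hvF, hvG⟩)
    · have h1 : B v = θ' j • v + (B v - θ' j • v) := by abel
      have h2 : θ' j • v ∈ U j := Submodule.smul_mem _ _ ⟨hvF, hvG⟩
      have h3 : B v - θ' j • v ∈ U (j - 1) := by
        refine ⟨hBF j hjpos hj v hvF, ?_⟩
        exact Submodule.sub_mem _ (hBG j v hvG) (Submodule.smul_mem _ _ (hGle (by omega) hvG))
      rw [h1]
      exact Submodule.add_mem _ (hUW j hj h2) (hUW (j - 1) (by omega) h3)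
  have hWA : ∀ v ∈ W, A v ∈ W := by
    intro v hv
    have : W ≤ Submodule.comap A W := by
      refine iSup₂_le fun j hj => ?_
      exact fun u hu => Submodule.mem_comap.2 (hAU j (Nat.lt_succ_iff.1 (Finset.mem_range.1 hj)) u hu)
    exact this hv
  have hWB : ∀ v ∈ W, B v ∈ W := by
    intro v hv
    have : W ≤ Submodule.comap B W := by
      refine iSup₂_le fun j hj => ?_
      exact fun u hu => Submodule.mem_comap.2 (hBU j (Nat.lt_succ_iff.1 (Finset.mem_range.1 hj)) u hu)
    exact this hv
  have hWtop : W = ⊤ := by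
    rcases hIrr W hWA hWB with h | h
    · exfalso
      apply hF0
      have : U 0 = F 0 := by rw [hU]; simp [hGtop]
      rw [← this]
      exact le_antisymm (h ▸ hUW 0 (Nat.zero_le d)) bot_le
    · exact h
  intro k
  refine le_antisymm le_top ?_
  rw [← hWtop]
  refine iSup₂_le fun j hj => ?_
  rcases le_or_gt j k with h | h
  · exact le_trans (le_trans inf_le_left (hFle h)) le_sup_left
  · exact le_trans (le_trans inf_le_right (hGle h)) le_sup_right

end Helpers

namespace TridiagonalPair
variable {K V : Type*} [Field K] [AddCommGroup V] [Module K V] [FiniteDimensional K V]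
variable (p : TridiagonalPair K V)

/-- The pair with the roles of `A` and `B` interchanged. -/
def swap : TridiagonalPair K V :=
  ⟨p.B, p.A, p.d, p.Ew, p.Ev, p.θ', p.θ, p.hEw_eig, p.hEw_ne, p.hEw_all, p.hθ'_inj,
    p.hEw_top, p.hEw_bot, p.hEv_eig, p.hEv_ne, p.hEv_all, p.hθ_inj, p.hEv_top, p.hEv_bot,
    p.hTriA, p.hTriB, fun W h1 h2 => p.hIrr W h2 h1⟩

/-- `V*_{≤ j}`. -/
def EwLe (j : ℕ) : Submodule K V := ⨆ h ∈ Finset.range (j + 1), p.Ew h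
/-- `V*_{≥ j}`. -/
def EwGe (j : ℕ) : Submodule K V := ⨆ h ∈ Finset.Icc j p.d, p.Ew h

abbrev EvLe (j : ℕ) : Submodule K V := p.swap.EwLe j
abbrev EvGe (j : ℕ) : Submodule K V := p.swap.EwGe j

lemma ew_le_ewLe {h j : ℕ} (hj : h ≤ j) : p.Ew h ≤ p.EwLe j :=
  le_iSup₂_of_le h (Finset.mem_range.2 (Nat.lt_succ_of_le hj)) le_rfl

lemma ew_le_ewGe {h j : ℕ} (hj : j ≤ h) : p.Ew h ≤ p.EwGe j := by
  rcases le_or_gt h p.d with hd | hd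
  · exact le_iSup₂_of_le h (Finset.mem_Icc.2 ⟨hj, hd⟩) le_rfl
  · rw [p.hEw_bot h hd]; exact bot_le

lemma ewLe_mono {j k : ℕ} (hjk : j ≤ k) : p.EwLe j ≤ p.EwLe k :=
  iSup₂_le fun h hh => p.ew_le_ewLe (le_trans (Nat.lt_succ_iff.1 (Finset.mem_range.1 hh)) hjk)

lemma ewGe_anti {j k : ℕ} (hjk : j ≤ k) : p.EwGe k ≤ p.EwGe j :=
  iSup₂_le fun h hh => p.ew_le_ewGe (le_trans hjk (Finset.mem_Icc.1 hh).1)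

lemma ewLe_top {j : ℕ} (hj : p.d ≤ j) : p.EwLe j = ⊤ := by
  refine le_antisymm le_top ?_
  rw [← p.hEw_top]
  exact iSup₂_le fun h hh => p.ew_le_ewLe (le_trans (Nat.lt_succ_iff.1 (Finset.mem_range.1 hh)) hj)

lemma ewGe_zero : p.EwGe 0 = ⊤ := by
  refine le_antisymm le_top ?_
  rw [← p.hEw_top]
  exact iSup₂_le fun h _ => p.ew_le_ewGe (Nat.zero_le h)

lemma ewGe_bot {j : ℕ} (hj : p.d < j) : p.EwGe j = ⊥ := by
  rw [EwGe, Finset.Icc_eq_empty (by omega)]; simp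

lemma ewGe_d : p.EwGe p.d = p.Ew p.d := by
  rw [EwGe, Finset.Icc_self]; simp

lemma ewLe_zero : p.EwLe 0 = p.Ew 0 := by
  rw [EwLe]; simp

lemma B_apply {h : ℕ} (hh : h ≤ p.d) {v : V} (hv : v ∈ p.Ew h) : p.B v = p.θ' h • v :=
  Module.End.mem_eigenspace_iff.1 (by rwa [p.hEw_eig h hh] at hv)

/-- S1 : `A` raises the `Ew`-flag by one. -/
lemma S1 {j : ℕ} {v : V} (hv : v ∈ p.EwLe j) : p.A v ∈ p.EwLe (j + 1) := by
  revert v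
  suffices h : p.EwLe j ≤ (p.EwLe (j + 1)).comap p.A by exact fun v hv => h hv
  refine iSup₂_le fun h hh => ?_
  rcases le_or_gt h p.d with hd | hd
  · intro v hv
    have := p.hTriA h hd v hv
    refine Submodule.mem_comap.2 ?_
    have hle : p.Ew (h-1) ⊔ p.Ew h ⊔ p.Ew (h+1) ≤ p.EwLe (j+1) := by
      have h1 : h ≤ j := Nat.lt_succ_iff.1 (Finset.mem_range.1 hh)
      exact sup_le (sup_le (p.ew_le_ewLe (by omega)) (p.ew_le_ewLe (by omega)))
        (p.ew_le_ewLe (by omega))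
    exact hle this
  · rw [p.hEw_bot h hd]
    intro v hv
    simp only [Submodule.mem_bot] at hv
    simp [hv]

/-- S2 : `B - θ'_j` lowers the truncated `Ew`-flag. -/
lemma S2 {j : ℕ} (hj : j ≤ p.d) {v : V} (hv : v ∈ p.EwLe j) :
    p.B v - p.θ' j • v ∈ p.EwLe (j - 1) := by
  revert v
  suffices h : p.EwLe j ≤ (p.EwLe (j - 1)).comap (p.B - p.θ' j • (1 : Module.End K V)) by
    intro v hv
    simpa using h hv
  refine iSup₂_le fun h hh => ?_
  have h1 : h ≤ j := Nat.lt_succ_iff.1 (Finset.mem_range.1 hh)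
  intro v hv
  refine Submodule.mem_comap.2 ?_
  have : (p.B - p.θ' j • (1 : Module.End K V)) v = (p.θ' h - p.θ' j) • v := by
    simp [LinearMap.sub_apply, p.B_apply (le_trans h1 hj) hv, sub_smul]
  rw [this]
  rcases eq_or_lt_of_le h1 with rfl | hlt
  · simp
  · exact Submodule.smul_mem _ _ (p.ew_le_ewLe (by omega) hv)

/-- S3 : `A` lowers the `Ew`-coflag by one. -/
lemma S3 {j : ℕ} {v : V} (hv : v ∈ p.EwGe j) : p.A v ∈ p.EwGe (j - 1) := by
  revert v
  suffices h : p.EwGe j ≤ (p.EwGe (j - 1)).comap p.A by exact fun v hv => h hv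
  refine iSup₂_le fun h hh => ?_
  obtain ⟨hjh, hhd⟩ := Finset.mem_Icc.1 hh
  intro v hv
  refine Submodule.mem_comap.2 ?_
  have := p.hTriA h hhd v hv
  have hle : p.Ew (h-1) ⊔ p.Ew h ⊔ p.Ew (h+1) ≤ p.EwGe (j-1) := by
    exact sup_le (sup_le (p.ew_le_ewGe (by omega)) (p.ew_le_ewGe (by omega)))
      (p.ew_le_ewGe (by omega))
  exact hle this

/-- S4 : `B - θ'_j` raises the `Ew`-coflag. -/
lemma S4 {j : ℕ} (hj : j ≤ p.d) {v : V} (hv : v ∈ p.EwGe j) :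
    p.B v - p.θ' j • v ∈ p.EwGe (j + 1) := by
  revert v
  suffices h : p.EwGe j ≤ (p.EwGe (j + 1)).comap (p.B - p.θ' j • (1 : Module.End K V)) by
    intro v hv
    simpa using h hv
  refine iSup₂_le fun h hh => ?_
  obtain ⟨hjh, hhd⟩ := Finset.mem_Icc.1 hh
  intro v hv
  refine Submodule.mem_comap.2 ?_
  have : (p.B - p.θ' j • (1 : Module.End K V)) v = (p.θ' h - p.θ' j) • v := by
    simp [LinearMap.sub_apply, p.B_apply hhd hv, sub_smul]
  rw [this]
  rcases eq_or_lt_of_le hjh with rfl | hlt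
  · simp
  · exact Submodule.smul_mem _ _ (p.ew_le_ewGe (by omega) hv)

lemma step1_p : ∀ k, p.EwLe k ⊔ p.EvGe (k + 1) = ⊤ := by
  refine step1 p.A p.B p.d p.EwLe p.EvGe p.θ p.θ' ?_ ?_ ?_ ?_ ?_ ?_ ?_ ?_ ?_ ?_ p.hIrr
  · rw [p.ewLe_zero]; exact p.hEw_ne 0 (Nat.zero_le _)
  · exact p.swap.ewGe_zero
  · exact fun j hj => p.swap.ewGe_bot hj
  · exact fun j => p.ewLe_mono (Nat.le_succ j)
  · exact fun j => p.swap.ewGe_anti (Nat.le_succ j)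
  · exact fun j v hv => p.S1 hv
  · intro v hv
    rw [p.ewLe_zero] at hv
    exact p.B_apply (Nat.zero_le _) hv
  · exact fun j _ hj v hv => p.S2 hj hv
  · exact fun j hj v hv => p.swap.S4 hj hv
  · exact fun j v hv => p.swap.S3 hv

lemma step1_rev3 (hd1 : 1 ≤ p.d) : p.EwLe 0 ⊔ p.EvLe (p.d - 1) = ⊤ := by
  have hEvLeTop : ∀ j, p.d ≤ j → p.EvLe j = ⊤ := fun j hj => p.swap.ewLe_top hj
  have h := step1 p.A p.B p.d p.EwLe
    (fun j => if j ≤ p.d then p.EvLe (p.d - j) else ⊥) (fun j => p.θ (p.d - j)) p.θ'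
    ?_ ?_ ?_ ?_ ?_ ?_ ?_ ?_ ?_ ?_ p.hIrr 0
  · beta_reduce at h
    rw [if_pos hd1] at h
    exact h
  · rw [p.ewLe_zero]; exact p.hEw_ne 0 (Nat.zero_le _)
  · beta_reduce
    rw [if_pos (Nat.zero_le _), Nat.sub_zero]
    exact hEvLeTop _ le_rfl
  · intro j hj; beta_reduce; rw [if_neg (by omega)]
  · exact fun j => p.ewLe_mono (Nat.le_succ j)
  · intro j
    beta_reduce
    rcases le_or_gt (j + 1) p.d with h | h
    · rw [if_pos h, if_pos (by omega)]
      exact p.swap.ewLe_mono (by omega)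
    · rw [if_neg (by omega)]; exact bot_le
  · exact fun j v hv => p.S1 hv
  · intro v hv
    rw [p.ewLe_zero] at hv
    exact p.B_apply (Nat.zero_le _) hv
  · exact fun j _ hj v hv => p.S2 hj hv
  · -- hAG
    intro j hj v hv
    beta_reduce at hv ⊢
    rw [if_pos hj] at hv
    rcases eq_or_lt_of_le hj with rfl | hlt
    · have hv0 : v ∈ p.Ev 0 := by
        rw [Nat.sub_self] at hv
        have hv' : v ∈ p.swap.EwLe 0 := hv
        rw [p.swap.ewLe_zero] at hv'
        exact hv'
      have heq : p.A v = p.θ (p.d - p.d) • v := by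
        rw [Nat.sub_self]
        exact p.swap.B_apply (Nat.zero_le _) hv0
      rw [heq, sub_self]
      exact Submodule.zero_mem _
    · have h2 := p.swap.S2 (j := p.d - j) (Nat.sub_le p.d j) hv
      rw [if_pos (by omega : j + 1 ≤ p.d)]
      have heq : p.d - j - 1 = p.d - (j + 1) := by omega
      rwa [heq] at h2
  · -- hBG
    intro j v hv
    beta_reduce at hv ⊢
    rcases Nat.eq_zero_or_pos j with rfl | hjpos
    · rw [Nat.zero_sub, if_pos (Nat.zero_le _), Nat.sub_zero, hEvLeTop _ le_rfl]
      exact Submodule.mem_top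
    · rcases le_or_gt j p.d with h | h
      · rw [if_pos h] at hv
        have h2 := p.swap.S1 hv
        rw [if_pos (by omega : j - 1 ≤ p.d)]
        have heq : p.d - j + 1 = p.d - (j - 1) := by omega
        rwa [heq] at h2
      · rw [if_neg (by omega)] at hv
        simp only [Submodule.mem_bot] at hv
        subst hv
        simp only [map_zero]
        exact Submodule.zero_mem _

lemma step1_rev4 (hd1 : 1 ≤ p.d) : p.EwGe 1 ⊔ p.EvGe p.d = ⊤ := by
  have h := step1 p.A p.B p.d (fun j => p.EwGe (p.d - j)) p.EvGe p.θ
    (fun j => p.θ' (p.d - j))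
    ?_ ?_ ?_ ?_ ?_ ?_ ?_ ?_ ?_ ?_ p.hIrr (p.d - 1)
  · beta_reduce at h
    have h1 : p.d - (p.d - 1) = 1 := by omega
    have h2 : p.d - 1 + 1 = p.d := by omega
    rwa [h1, h2] at h
  · beta_reduce
    rw [Nat.sub_zero, p.ewGe_d]
    exact p.hEw_ne _ le_rfl
  · exact p.swap.ewGe_zero
  · exact fun j hj => p.swap.ewGe_bot hj
  · intro j; beta_reduce; exact p.ewGe_anti (by omega)
  · exact fun j => p.swap.ewGe_anti (Nat.le_succ j)
  · -- hAF
    intro j v hv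
    beta_reduce at hv ⊢
    have h2 := p.S3 hv
    have heq : p.d - j - 1 = p.d - (j + 1) := by omega
    rwa [heq] at h2
  · -- hB0
    intro v hv
    beta_reduce at hv
    rw [Nat.sub_zero, p.ewGe_d] at hv
    exact p.B_apply le_rfl hv
  · -- hBF
    intro j hj1 hjd v hv
    beta_reduce at hv ⊢
    have h2 := p.S4 (j := p.d - j) (by omega) hv
    have heq : p.d - j + 1 = p.d - (j - 1) := by omega
    rwa [heq] at h2
  · exact fun j hj v hv => p.swap.S4 hj hv
  · exact fun j v hv => p.swap.S3 hv

/-- Eigenvectors for distinct eigenvalues are independent. -/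
lemma sum_eq_zero {s : Finset ℕ} (hs : ∀ h ∈ s, h ≤ p.d) {c : ℕ → V}
    (hc : ∀ h ∈ s, c h ∈ p.Ew h) (hsum : ∑ h ∈ s, c h = 0) : ∀ a ∈ s, c a = 0 := by
  classical
  intro a ha
  set g : Polynomial K := ∏ b ∈ s.erase a, (X - C (p.θ' b)) with hg
  have key : ∀ h ∈ s, (Polynomial.aeval p.B) g (c h) = g.eval (p.θ' h) • c h := by
    intro h hh
    exact aeval_eig (p.B_apply (hs h hh) (hc h hh)) g
  have h0 : ∑ h ∈ s, g.eval (p.θ' h) • c h = 0 := by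
    have := congrArg (fun v => (Polynomial.aeval p.B) g v) hsum
    simp only [map_zero] at this
    rw [map_sum] at this
    rw [← Finset.sum_congr rfl key]
    exact this
  have hvan : ∀ h ∈ s, h ≠ a → g.eval (p.θ' h) • c h = 0 := by
    intro h hh hne
    have : g.eval (p.θ' h) = 0 := by
      rw [hg, Polynomial.eval_prod]
      exact Finset.prod_eq_zero (Finset.mem_erase.2 ⟨hne, hh⟩) (by simp)
    rw [this, zero_smul]
  have ha0 : g.eval (p.θ' a) • c a = 0 := by
    rwa [Finset.sum_eq_single_of_mem a ha (fun b hb hne => hvan b hb hne)] at h0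
  have hne : g.eval (p.θ' a) ≠ 0 := by
    rw [hg, Polynomial.eval_prod]
    rw [Finset.prod_ne_zero_iff]
    intro b hb
    obtain ⟨hba, hbs⟩ := Finset.mem_erase.1 hb
    simp only [Polynomial.eval_sub, Polynomial.eval_X, Polynomial.eval_C, sub_ne_zero]
    intro hEq
    exact hba (p.hθ'_inj b (hs b hbs) a (hs a ha) hEq.symm)
  rcases smul_eq_zero.1 ha0 with h | h
  · exact absurd h hne
  · exact h

lemma sup_split {k : ℕ} : p.EwLe k ⊔ p.EwGe (k + 1) = ⊤ := by
  refine le_antisymm le_top ?_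
  rw [← p.hEw_top]
  refine iSup₂_le fun h hh => ?_
  rcases le_or_gt h k with h1 | h1
  · exact le_trans (p.ew_le_ewLe h1) le_sup_left
  · exact le_trans (p.ew_le_ewGe h1) le_sup_right

lemma inf_split {k : ℕ} (hk : k ≤ p.d) : p.EwLe k ⊓ p.EwGe (k + 1) = ⊥ := by
  classical
  rw [eq_bot_iff]
  rintro v ⟨hv1, hv2⟩
  obtain ⟨c, hc, hcv⟩ := mem_biSup_finset hv1
  obtain ⟨e, he, hev⟩ := mem_biSup_finset hv2
  simp only [Submodule.mem_bot]
  set s : Finset ℕ := Finset.range (k + 1) ∪ Finset.Icc (k + 1) p.d with hsdef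
  have hdisj : Disjoint (Finset.range (k + 1)) (Finset.Icc (k + 1) p.d) := by
    rw [Finset.disjoint_left]
    intro b hb hb2
    rw [Finset.mem_range] at hb
    rw [Finset.mem_Icc] at hb2
    omega
  set u : ℕ → V := fun h => (if h ∈ Finset.range (k + 1) then c h else 0)
    - (if h ∈ Finset.Icc (k + 1) p.d then e h else 0) with hu
  have hsum : ∑ h ∈ s, u h = 0 := by
    rw [hu]
    simp only [Finset.sum_sub_distrib]
    rw [hsdef]
    rw [Finset.sum_ite_mem, Finset.sum_ite_mem]
    rw [Finset.union_inter_cancel_left, Finset.union_inter_cancel_right]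
    rw [← hcv, ← hev]
    exact sub_self v
  have hmem : ∀ h ∈ s, u h ∈ p.Ew h := by
    intro h hh
    rw [hu]
    refine Submodule.sub_mem _ ?_ ?_
    · split
      · next hmem2 => exact hc h hmem2
      · exact Submodule.zero_mem _
    · split
      · next hmem2 => exact he h hmem2
      · exact Submodule.zero_mem _
  have hsd : ∀ h ∈ s, h ≤ p.d := by
    intro h hh
    rw [hsdef, Finset.mem_union, Finset.mem_range, Finset.mem_Icc] at hh
    omega
  have hz := p.sum_eq_zero hsd hmem hsum
  have hcz : ∀ h ∈ Finset.range (k + 1), c h = 0 := by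
    intro h hh
    have h1 := hz h (by rw [hsdef, Finset.mem_union]; exact Or.inl hh)
    rw [hu] at h1
    simp only [if_pos hh] at h1
    have h2 : h ∉ Finset.Icc (k + 1) p.d := Finset.disjoint_left.1 hdisj hh
    simp only [if_neg h2, sub_zero] at h1
    exact h1
  rw [hcv]
  exact Finset.sum_eq_zero hcz

lemma rank_split {k : ℕ} (hk : k ≤ p.d) :
    Module.finrank K (p.EwLe k) + Module.finrank K (p.EwGe (k + 1)) = Module.finrank K V := by
  have h := Submodule.finrank_sup_add_finrank_inf_eq (p.EwLe k) (p.EwGe (k + 1))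
  rw [p.sup_split, p.inf_split hk, finrank_top, finrank_bot] at h
  omega

lemma inf_I1 {k : ℕ} (hk : k < p.d) : p.EwLe k ⊓ p.EvGe (k + 1) = ⊥ := by
  refine dimcount (X' := p.EwGe (k + 1)) (Y' := p.EvLe k) (p.step1_p k) ?_ (p.rank_split hk.le) ?_
  · rw [sup_comm]
    exact p.swap.step1_p k
  · rw [Nat.add_comm]
    exact p.swap.rank_split hk.le

lemma inf_I2 (hd1 : 1 ≤ p.d) : p.EwLe 0 ⊓ p.EvLe (p.d - 1) = ⊥ := by
  refine dimcount (X' := p.EwGe 1) (Y' := p.EvGe p.d) (p.step1_rev3 hd1) (p.step1_rev4 hd1) (p.rank_split (Nat.zero_le _)) ?_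
  have h := p.swap.rank_split (k := p.d - 1) (show p.d - 1 ≤ p.swap.d from Nat.sub_le _ _)
  have he : p.d - 1 + 1 = p.d := by omega
  rw [he] at h
  exact h

lemma htau_flag : ∀ (m j : ℕ) (v : V), v ∈ p.EwLe j →
    (Polynomial.aeval p.A) (tau p.θ m) v ∈ p.EwLe (j + m) := by
  intro m
  induction m with
  | zero =>
      intro j v hv
      simpa [tau] using hv
  | succ n ih =>
      intro j v hv
      have hfac : tau p.θ (n + 1) = (X - C (p.θ n)) * tau p.θ n := by
        rw [tau, tau, Finset.prod_range_succ, mul_comm]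
      rw [hfac, map_mul, Module.End.mul_apply]
      have h1 : (Polynomial.aeval p.A) (tau p.θ n) v ∈ p.EwLe (j + n) := ih j v hv
      have h2 : (Polynomial.aeval p.A) (X - C (p.θ n)) ((Polynomial.aeval p.A) (tau p.θ n) v)
          ∈ p.EwLe (j + n + 1) := by
        have heval : (Polynomial.aeval p.A) (X - C (p.θ n)) = p.A - p.θ n • 1 := by
          simp [map_sub, Polynomial.aeval_X, Polynomial.aeval_C, Algebra.algebraMap_eq_smul_one]
        rw [heval]
        simp only [LinearMap.sub_apply, LinearMap.smul_apply, Module.End.one_apply]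
        exact Submodule.sub_mem _ (p.S1 h1)
          (Submodule.smul_mem _ _ (p.ewLe_mono (Nat.le_succ _) h1))
      have heq : j + n + 1 = j + (n + 1) := by omega
      rwa [heq] at h2

lemma tau_eval_ne_zero {m h : ℕ} (hm : m ≤ p.d) (hh : h ≤ p.d) (hmh : m ≤ h) :
    (tau p.θ m).eval (p.θ h) ≠ 0 := by
  rw [tau, Polynomial.eval_prod]
  rw [Finset.prod_ne_zero_iff]
  intro k hk
  rw [Finset.mem_range] at hk
  simp only [Polynomial.eval_sub, Polynomial.eval_X, Polynomial.eval_C, sub_ne_zero]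
  intro hEq
  have := p.hθ_inj h hh k (by omega) hEq
  omega

lemma tau_eval_eq_zero {m h : ℕ} (hhm : h < m) :
    (tau p.θ m).eval (p.θ h) = 0 := by
  rw [tau, Polynomial.eval_prod]
  exact Finset.prod_eq_zero (Finset.mem_range.2 hhm) (by simp)

theorem mainA (p q : TridiagonalPair K V) (hd1 : 1 ≤ p.d) (hd : q.d = p.d)
    (hEv : ∀ i ≤ p.d, q.Ev i = p.Ev i) (hEw : ∀ i ≤ p.d, q.Ew i = p.Ew i) :
    ∃ r s : K, r ≠ 0 ∧ q.A = r • p.A + s • (1 : Module.End K V) := by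
  classical
  have hA : ∀ m ≤ p.d, ∀ v ∈ p.Ev m, p.A v = p.θ m • v := fun m hm v hv =>
    p.swap.B_apply hm hv
  have hA' : ∀ m ≤ p.d, ∀ v ∈ p.Ev m, q.A v = q.θ m • v := by
    intro m hm v hv
    have hv' : v ∈ q.Ev m := by rw [hEv m hm]; exact hv
    rw [q.hEv_eig m (by omega : m ≤ q.d)] at hv'
    exact Module.End.mem_eigenspace_iff.1 hv'
  have hθ01 : p.θ 1 - p.θ 0 ≠ 0 := by
    rw [sub_ne_zero]
    intro hEq
    have := p.hθ_inj 1 hd1 0 (Nat.zero_le _) hEq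
    omega
  have hφ01 : q.θ 1 - q.θ 0 ≠ 0 := by
    rw [sub_ne_zero]
    intro hEq
    have := q.hθ_inj 1 (by omega) 0 (Nat.zero_le _) hEq
    omega
  set r : K := (q.θ 1 - q.θ 0) / (p.θ 1 - p.θ 0) with hrdef
  set s : K := q.θ 0 - r * p.θ 0 with hsdef
  have hr : r ≠ 0 := div_ne_zero hφ01 hθ01
  have hrθ : r * (p.θ 1 - p.θ 0) = q.θ 1 - q.θ 0 := by
    rw [hrdef]
    field_simp
  have key : ∀ m, m ≤ p.d → q.θ m - (r * p.θ m + s) = 0 := by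
    intro m
    induction m using Nat.strong_induction_on with
    | _ m IH =>
      intro hm
      match m, hm, IH with
      | 0, hm, IH => rw [hsdef]; ring
      | 1, hm, IH =>
          have : q.θ 1 - (r * p.θ 1 + s) = (q.θ 1 - q.θ 0) - r * (p.θ 1 - p.θ 0) := by
            rw [hsdef]; ring
          rw [this, hrθ]; ring
      | (i + 2), hm, IH =>
          -- set up
          have hi1 : 1 ≤ i + 1 := by omega
          have hid : i + 1 < p.d := by omega
          set D : Module.End K V := q.A - r • p.A - s • (1 : Module.End K V) with hDdef
          have hD : ∀ h ≤ p.d, ∀ v ∈ p.Ev h, D v = (q.θ h - (r * p.θ h + s)) • v := by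
            intro h hh v hv
            rw [hDdef]
            simp only [LinearMap.sub_apply, LinearMap.smul_apply, Module.End.one_apply]
            rw [hA' h hh v hv, hA h hh v hv]
            module
          have hDkill : ∀ h ≤ i + 1, ∀ v ∈ p.Ev h, D v = 0 := by
            intro h hh v hv
            rw [hD h (by omega) v hv, IH h (by omega) (by omega), zero_smul]
          have hD2 : ∀ v : V, D v ∈ p.EvGe (i + 2) := by
            intro v
            have hle : (⊤ : Submodule K V) ≤ (p.EvGe (i + 2)).comap D := by
              rw [← p.hEv_top]
              refine iSup₂_le fun h hh => ?_
              intro u hu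
              rw [Finset.mem_range] at hh
              refine Submodule.mem_comap.2 ?_
              rcases le_or_gt h (i + 1) with h1 | h1
              · rw [hDkill h h1 u hu]
                exact Submodule.zero_mem _
              · rw [hD h (by omega) u hu]
                exact Submodule.smul_mem _ _ (p.swap.ew_le_ewGe h1 hu)
            exact hle Submodule.mem_top
          have hDV0 : ∀ v ∈ p.Ew 0, D v = 0 := by
            intro v hv
            have hqA : q.A v ∈ p.EwLe 1 := by
              have h1 := q.hTriA 0 (Nat.zero_le _) v (by rw [hEw 0 (Nat.zero_le _)]; exact hv)
              have h2 : q.Ew (0 - 1) ⊔ q.Ew 0 ⊔ q.Ew 1 ≤ p.EwLe 1 := by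
                rw [Nat.zero_sub, hEw 0 (Nat.zero_le _), hEw 1 (by omega)]
                exact sup_le (sup_le (p.ew_le_ewLe (by omega)) (p.ew_le_ewLe (by omega)))
                  (p.ew_le_ewLe (by omega))
              exact h2 h1
            have hpA : p.A v ∈ p.EwLe 1 := by
              have := p.S1 (j := 0) (by rw [p.ewLe_zero]; exact hv)
              exact this
            have hv1 : v ∈ p.EwLe 1 := p.ew_le_ewLe (by omega) hv
            have hDv : D v ∈ p.EwLe 1 := by
              rw [hDdef]
              simp only [LinearMap.sub_apply, LinearMap.smul_apply, Module.End.one_apply]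
              exact Submodule.sub_mem _ (Submodule.sub_mem _ hqA (Submodule.smul_mem _ _ hpA))
                (Submodule.smul_mem _ _ hv1)
            have hmem : D v ∈ p.EwLe (i + 1) ⊓ p.EvGe (i + 2) :=
              ⟨p.ewLe_mono hi1 hDv, hD2 v⟩
            rw [p.inf_I1 hid] at hmem
            exact hmem
          have hDA : D * p.A = p.A * D := by
            apply LinearMap.ext
            intro v
            have hle : (⊤ : Submodule K V) ≤ LinearMap.eqLocus (D * p.A) (p.A * D) := by
              rw [← p.hEv_top]
              refine iSup₂_le fun h hh => ?_
              rw [Finset.mem_range] at hh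
              intro u hu
              have hh' : h ≤ p.d := by omega
              show (D * p.A) u = (p.A * D) u
              rw [Module.End.mul_apply, Module.End.mul_apply, hA h hh' u hu, hD h hh' u hu,
                map_smul, map_smul, hA h hh' u hu, hD h hh' u hu, smul_comm]
            exact hle Submodule.mem_top
          have hcomm : ∀ (g : Polynomial K), Commute D ((Polynomial.aeval p.A) g) := by
            intro g
            induction g using Polynomial.induction_on with
            | C a =>
                rw [Polynomial.aeval_C]
                exact (Algebra.commutes a D).symm
            | add f g hf hg =>
                rw [map_add]
                exact hf.add_right hg
            | monomial n a hmon =>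
                have : C a * X ^ (n + 1) = C a * X ^ n * X := by ring
                rw [this, map_mul]
                exact hmon.mul_right (by rw [Polynomial.aeval_X]; exact hDA)
          set T : Module.End K V := (Polynomial.aeval p.A) (tau p.θ (i + 2)) with hTdef
          -- choose a nonzero vector in Ew 0
          obtain ⟨v0, hv0mem, hv0ne⟩ := Submodule.exists_mem_ne_zero_of_ne_bot
            (p.hEw_ne 0 (Nat.zero_le _))
          -- T v0 ≠ 0
          have hTv0 : T v0 ≠ 0 := by
            intro h0
            obtain ⟨c, hc, hcv⟩ := mem_biSup_finset (M := p.Ev) (s := Finset.range (p.d + 1))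
              (by rw [p.hEv_top]; exact Submodule.mem_top : v0 ∈ ⨆ h ∈ Finset.range (p.d + 1), p.Ev h)
            have hTsum : ∑ h ∈ Finset.range (p.d + 1),
                ((tau p.θ (i + 2)).eval (p.θ h)) • c h = 0 := by
              have h1 : T v0 = ∑ h ∈ Finset.range (p.d + 1), T (c h) := by
                rw [hcv, map_sum]
              rw [h0] at h1
              have h2 : ∀ h ∈ Finset.range (p.d + 1),
                  T (c h) = ((tau p.θ (i + 2)).eval (p.θ h)) • c h := by
                intro h hh
                rw [Finset.mem_range] at hh
                exact aeval_eig (hA h (by omega) (c h) (hc h (Finset.mem_range.2 (by omega)))) _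
              rw [Finset.sum_congr rfl h2] at h1
              exact h1.symm
            have hz := p.swap.sum_eq_zero (s := Finset.range (p.d + 1))
              (fun h hh => by rw [Finset.mem_range] at hh; exact (show h ≤ p.d by omega))
              (c := fun h => ((tau p.θ (i + 2)).eval (p.θ h)) • c h)
              (fun h hh => Submodule.smul_mem _ _ (hc h hh)) hTsum
            have hch : ∀ h ∈ Finset.range (p.d + 1), i + 2 ≤ h → c h = 0 := by
              intro h hh h2
              rw [Finset.mem_range] at hh
              have := hz h (Finset.mem_range.2 (by omega))
              rcases smul_eq_zero.1 this with h3 | h3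
              · exact absurd h3 (p.tau_eval_ne_zero (by omega) (by omega) h2)
              · exact h3
            have hv0le : v0 ∈ p.EvLe (p.d - 1) := by
              rw [hcv]
              refine Submodule.sum_mem _ ?_
              intro h hh
              rcases le_or_gt (i + 2) h with h1 | h1
              · rw [hch h hh h1]
                exact Submodule.zero_mem _
              · refine p.swap.ew_le_ewLe (j := p.d - 1) (by omega) (hc h hh)
            have hmem : v0 ∈ p.EwLe 0 ⊓ p.EvLe (p.d - 1) :=
              ⟨by rw [p.ewLe_zero]; exact hv0mem, hv0le⟩
            rw [p.inf_I2 hd1] at hmem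
            exact hv0ne hmem
          set w : V := T v0 with hwdef
          have hw1 : w ∈ p.EwLe (i + 2) := by
            have := p.htau_flag (i + 2) 0 v0 (by rw [p.ewLe_zero]; exact hv0mem)
            rwa [Nat.zero_add] at this
          have hw2 : w ∈ p.EvGe (i + 2) := by
            have hle : (⊤ : Submodule K V) ≤ (p.EvGe (i + 2)).comap T := by
              rw [← p.hEv_top]
              refine iSup₂_le fun h hh => ?_
              rw [Finset.mem_range] at hh
              intro u hu
              refine Submodule.mem_comap.2 ?_
              have hTu : T u = ((tau p.θ (i + 2)).eval (p.θ h)) • u :=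
                aeval_eig (hA h (by omega) u hu) _
              rw [hTu]
              rcases le_or_gt (i + 2) h with h1 | h1
              · exact Submodule.smul_mem _ _ (p.swap.ew_le_ewGe h1 hu)
              · rw [p.tau_eval_eq_zero h1, zero_smul]
                exact Submodule.zero_mem _
            exact hle Submodule.mem_top
          have hDw : D w = 0 := by
            have h1 : D (T v0) = T (D v0) := by
              have := (hcomm (tau p.θ (i + 2))).eq
              calc D (T v0) = (D * T) v0 := rfl
                _ = (T * D) v0 := by rw [hTdef, this]
                _ = T (D v0) := rfl
            rw [hwdef, h1, hDV0 v0 hv0mem, map_zero]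
          -- decompose w
          obtain ⟨c, hc, hcw⟩ := mem_biSup_finset (M := p.Ev) (s := Finset.Icc (i + 2) p.d) hw2
          have hDsum : ∑ h ∈ Finset.Icc (i + 2) p.d,
              (q.θ h - (r * p.θ h + s)) • c h = 0 := by
            have h1 : D w = ∑ h ∈ Finset.Icc (i + 2) p.d, D (c h) := by rw [hcw, map_sum]
            rw [hDw] at h1
            have h2 : ∀ h ∈ Finset.Icc (i + 2) p.d,
                D (c h) = (q.θ h - (r * p.θ h + s)) • c h := by
              intro h hh
              rw [Finset.mem_Icc] at hh
              exact hD h hh.2 (c h) (hc h (Finset.mem_Icc.2 hh))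
            rw [Finset.sum_congr rfl h2] at h1
            exact h1.symm
          have hz := p.swap.sum_eq_zero (s := Finset.Icc (i + 2) p.d)
            (fun h hh => by rw [Finset.mem_Icc] at hh; exact (hh.2 : h ≤ p.swap.d))
            (c := fun h => (q.θ h - (r * p.θ h + s)) • c h)
            (fun h hh => Submodule.smul_mem _ _ (hc h hh)) hDsum
          by_contra hne
          have hcm : c (i + 2) = 0 := by
            have := hz (i + 2) (Finset.mem_Icc.2 ⟨le_rfl, hm⟩)
            rcases smul_eq_zero.1 this with h3 | h3
            · exact absurd h3 hne
            · exact h3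
          have hw3 : w ∈ p.EvGe (i + 3) := by
            rw [hcw]
            refine Submodule.sum_mem _ ?_
            intro h hh
            rw [Finset.mem_Icc] at hh
            rcases eq_or_lt_of_le hh.1 with rfl | h1
            · rw [hcm]; exact Submodule.zero_mem _
            · exact p.swap.ew_le_ewGe h1 (hc h (Finset.mem_Icc.2 hh))
          have hwzero : w = 0 := by
            rcases eq_or_lt_of_le hm with hEq | hlt
            · -- i + 2 = p.d is impossible here?  i + 2 ≤ p.d; if equal, EvGe (i+3) = ⊥
              have : p.EvGe (i + 3) = ⊥ := p.swap.ewGe_bot (show p.d < i + 3 by omega)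
              rw [this] at hw3
              exact hw3
            · have hmem : w ∈ p.EwLe (i + 2) ⊓ p.EvGe (i + 3) := ⟨hw1, hw3⟩
              rw [p.inf_I1 (by omega : i + 2 < p.d)] at hmem
              exact hmem
          exact hTv0 hwzero
  refine ⟨r, s, hr, ?_⟩
  apply LinearMap.ext
  intro v
  have hle : (⊤ : Submodule K V) ≤
      LinearMap.eqLocus q.A (r • p.A + s • (1 : Module.End K V)) := by
    rw [← p.hEv_top]
    refine iSup₂_le fun h hh => ?_
    rw [Finset.mem_range] at hh
    intro u hu
    have hh' : h ≤ p.d := by omega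
    show q.A u = (r • p.A + s • (1 : Module.End K V)) u
    simp only [LinearMap.add_apply, LinearMap.smul_apply, Module.End.one_apply]
    rw [hA' h hh' u hu, hA h hh' u hu]
    have hkey : q.θ h = r * p.θ h + s := by linear_combination key h hh'
    rw [hkey]
    module
  exact hle Submodule.mem_top

end TridiagonalPair

/-- With `d ≥ 1`, if two tridiagonal pairs on `V` have the same eigenspace
orderings, then `A' = r A + s I` with `r ≠ 0`, and `A*' = r* A* + s* I`
with `r* ≠ 0`. -/
theorem stmt9 {K V : Type*} [Field K] [AddCommGroup V] [Module K V]
    [FiniteDimensional K V] (hpos : 0 < Module.finrank K V)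
    (p : TridiagonalPair K V)
    (hd1 : 1 ≤ p.d)
    (q : TridiagonalPair K V) (hd : q.d = p.d)
    (hEv : ∀ i ≤ p.d, q.Ev i = p.Ev i) (hEw : ∀ i ≤ p.d, q.Ew i = p.Ew i) :
    (∃ r s : K, r ≠ 0 ∧ q.A = r • p.A + s • (1 : Module.End K V)) ∧
    (∃ rs ss : K, rs ≠ 0 ∧ q.B = rs • p.B + ss • (1 : Module.End K V)) := by
  constructor
  · exact TridiagonalPair.mainA p q hd1 hd hEv hEw
  · exact TridiagonalPair.mainA p.swap q.swap hd1 hd (fun i hi => hEw i hi) (fun i hi => hEv i hi)
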